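/- Let r ≥ 1 be an integer, ε > 0 with 60r√ε < 1 and 90√ε < 1, and n sufficiently large. Let G be a non-bipartite B_{r+1}-free simple graph on n vertices with the maximum number of edges among such graphs, let C be a shortest odd cycle of G, and let V(G) = S ∪ T be a partition realizing a maximum cut with (1/2 − (3/2)√ε)n ≤ |S|, |T| ≤ (1/2 + (3/2)√ε)n. Let L = {v ∈ V(G) : d(v) ≤ (1/2 − 4√ε)n} and W = {v ∈ S : d_S(v) ≥ (7/2)√ε·n} ∪ {v ∈ T : d_T(v) ≥ (7/2)√ε·n}, and suppose |L| ≤ √ε·n, |W| ≤ (4/7)√ε·n, and every vertex of T \ (L ∪ W) has more than (1/2 − 8√ε)n neighbours in S. Then L ⊆ V(C), i.e., every vertex of degree at most (1/2 − 4√ε)n lies on C. -/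

import Mathlib

open SimpleGraph Set

/-- `G` contains no book `B_{r+1}`, i.e. no two adjacent vertices of `G` have at least
`r + 1` common neighbours. -/
def BookFree {V : Type*} (r : ℕ) (G : SimpleGraph V) : Prop :=
  ∀ u v : V, G.Adj u v → ({w : V | G.Adj u w ∧ G.Adj v w}).ncard ≤ r

/-- `d_X(v)`: the number of neighbours of `v` lying in `X`. -/
noncomputable def degIn {V : Type*} (G : SimpleGraph V) (X : Set V) (v : V) : ℕ :=
  {w ∈ X | G.Adj v w}.ncard

/-- `e(S, T)`: the number of edges of `G` with one endpoint in `S` and the other in `T`. -/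
noncomputable def cutCount {V : Type*} (G : SimpleGraph V) (S T : Set V) : ℕ :=
  {e ∈ G.edgeSet | ∃ u ∈ S, ∃ v ∈ T, e = s(u, v)}.ncard

/-- `(S, T)` is a partition of the vertex set of `G` realizing a maximum cut. -/
def IsMaxCut {V : Type*} (G : SimpleGraph V) (S T : Set V) : Prop :=
  S ∪ T = Set.univ ∧ S ∩ T = ∅ ∧
    ∀ S' T' : Set V, S' ∪ T' = Set.univ → S' ∩ T' = ∅ →
      cutCount G S' T' ≤ cutCount G S T

lemma odd_closed_walk_not_colorable {V : Type*} {G : SimpleGraph V} {v : V}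
    (p : G.Walk v v) (hodd : Odd p.length) : ¬ G.Colorable 2 := by
  rintro ⟨c⟩
  have key : ∀ {a b : V} (q : G.Walk a b),
      ((c a : Fin 2).val : ZMod 2) - ((c b : Fin 2).val : ZMod 2) = (q.length : ZMod 2) := by
    intro a b q
    induction q with
    | nil => simp
    | @cons a m b h q ih =>
      have hne : (c a).val ≠ (c m).val := fun hh => c.valid h (Fin.val_injective hh)
      have h1 : ((c a).val : ZMod 2) - ((c m).val : ZMod 2) = 1 := by
        have ha := (c a).isLt; have hb := (c m).isLt
        interval_cases h' : (c a).val <;> interval_cases h'' : (c m).val <;> simp_all <;> decide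
      rw [SimpleGraph.Walk.length_cons]
      push_cast
      rw [← ih]
      linear_combination h1
  have h0 := key p
  simp only [sub_self] at h0
  have hone : (p.length : ZMod 2) = 1 := by
    obtain ⟨k, hk⟩ := hodd
    rw [hk]; push_cast
    have h2 : (2 : ZMod 2) = 0 := by decide
    rw [h2]; ring
  rw [hone] at h0
  exact one_ne_zero h0.symm

lemma deg_split {n : ℕ} (G : SimpleGraph (Fin n)) (S T : Set (Fin n))
    (hU : S ∪ T = Set.univ) (hI : S ∩ T = ∅) (u : Fin n) :
    (G.neighborSet u).ncard = degIn G S u + degIn G T u := by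
  have hset : G.neighborSet u = {w ∈ S | G.Adj u w} ∪ {w ∈ T | G.Adj u w} := by
    ext w
    simp only [mem_neighborSet, Set.mem_union, Set.mem_setOf_eq]
    constructor
    · intro h
      have hw : w ∈ S ∪ T := by rw [hU]; trivial
      rcases hw with hw | hw
      · exact Or.inl ⟨hw, h⟩
      · exact Or.inr ⟨hw, h⟩
    · rintro (⟨_, h⟩ | ⟨_, h⟩) <;> exact h
  have hdisj : Disjoint {w ∈ S | G.Adj u w} {w ∈ T | G.Adj u w} := by
    rw [Set.disjoint_left]
    rintro w ⟨hwS, _⟩ ⟨hwT, _⟩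
    have : w ∈ S ∩ T := ⟨hwS, hwT⟩
    rw [hI] at this; exact this
  rw [hset, Set.ncard_union_eq hdisj (Set.toFinite _) (Set.toFinite _)]
  rfl

/-- Let `r ≥ 1` and `ε > 0` with `60r√ε < 1`, `90√ε < 1`, and `n` sufficiently large.  Let `G`
be a non-bipartite `B_{r+1}`-free graph on `n` vertices with the maximum number of edges among
such graphs, `C` a shortest odd cycle of `G`, and `V(G) = S ∪ T` a maximum-cut partition with
`(1/2 - (3/2)√ε)n ≤ |S|, |T| ≤ (1/2 + (3/2)√ε)n`.  With `L` and `W` as below, if `|L| ≤ √ε·n`,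
`|W| ≤ (4/7)√ε·n`, and every vertex of `T \ (L ∪ W)` has more than `(1/2 - 8√ε)n` neighbours
in `S`, then `L ⊆ V(C)`. -/
theorem stmt_16 (r : ℕ) (hr : 1 ≤ r) (ε : ℝ) (hε : 0 < ε)
    (h1 : 60 * (r : ℝ) * Real.sqrt ε < 1) (h2 : 90 * Real.sqrt ε < 1) :
    ∃ n₀ : ℕ, ∀ n : ℕ, n₀ ≤ n →
      ∀ G : SimpleGraph (Fin n), ¬ G.Colorable 2 → BookFree r G →
        (∀ H : SimpleGraph (Fin n), ¬ H.Colorable 2 → BookFree r H →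
          H.edgeSet.ncard ≤ G.edgeSet.ncard) →
        ∀ (v : Fin n) (C : G.Walk v v), C.IsCycle → Odd C.length →
          (∀ (u : Fin n) (D : G.Walk u u), D.IsCycle → Odd D.length →
            C.length ≤ D.length) →
        ∀ S T : Set (Fin n), IsMaxCut G S T →
          ((1 / 2 - 3 / 2 * Real.sqrt ε) * (n : ℝ) ≤ (S.ncard : ℝ)) →
          ((S.ncard : ℝ) ≤ (1 / 2 + 3 / 2 * Real.sqrt ε) * (n : ℝ)) →
          ((1 / 2 - 3 / 2 * Real.sqrt ε) * (n : ℝ) ≤ (T.ncard : ℝ)) →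
          ((T.ncard : ℝ) ≤ (1 / 2 + 3 / 2 * Real.sqrt ε) * (n : ℝ)) →
        ∀ L W : Set (Fin n),
          L = {v | ((G.neighborSet v).ncard : ℝ) ≤ (1 / 2 - 4 * Real.sqrt ε) * (n : ℝ)} →
          W = {v ∈ S | (7 / 2 : ℝ) * Real.sqrt ε * (n : ℝ) ≤ (degIn G S v : ℝ)} ∪
              {v ∈ T | (7 / 2 : ℝ) * Real.sqrt ε * (n : ℝ) ≤ (degIn G T v : ℝ)} →
          ((L.ncard : ℝ) ≤ Real.sqrt ε * (n : ℝ)) →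
          ((W.ncard : ℝ) ≤ 4 / 7 * Real.sqrt ε * (n : ℝ)) →
          (∀ x ∈ T \ (L ∪ W), (1 / 2 - 8 * Real.sqrt ε) * (n : ℝ) < (degIn G S x : ℝ)) →
          ∀ x ∈ L, x ∈ C.support := by
  refine ⟨4 * r + 5, ?_⟩
  intro n hn G hGnb hGbf hmax v C hC hCodd hCmin S T hcut hS1 hS2 hT1 hT2 L W hLdef hWdef
    hLn hWn hTS x hxL
  by_contra hxC
  obtain ⟨hUn, hInt, _⟩ := hcut
  set s : ℝ := Real.sqrt ε with hs_def
  have hs : 0 < s := Real.sqrt_pos.2 hε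
  have hn9 : 9 ≤ n := by omega
  have hn0 : (0 : ℝ) < n := by
    have : (9 : ℝ) ≤ n := by exact_mod_cast hn9
    linarith
  have hnr : (4 * (r : ℝ) + 5) ≤ n := by
    have : ((4 * r + 5 : ℕ) : ℝ) ≤ n := by exact_mod_cast hn
    push_cast at this; linarith
  have hsn : s * n ≤ n / 90 := by nlinarith
  have hsnpos : 0 < s * n := mul_pos hs hn0
  set A : Set (Fin n) := S \ (L ∪ W) with hAdef
  have hxA : x ∉ A := fun h => h.2 (Or.inl hxL)
  -- A is independent in G
  have hAindep : ∀ u w : Fin n, u ∈ A → w ∈ A → ¬ G.Adj u w := by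
    intro u w hu hw hadj
    have huS : u ∈ S := hu.1
    have hwS : w ∈ S := hw.1
    have huL : u ∉ L := fun h => hu.2 (Or.inl h)
    have huW : u ∉ W := fun h => hu.2 (Or.inr h)
    have hwL : w ∉ L := fun h => hw.2 (Or.inl h)
    have hwW : w ∉ W := fun h => hw.2 (Or.inr h)
    -- degree bounds for u and w
    have hdu : (1 / 2 - 4 * s) * (n : ℝ) < ((G.neighborSet u).ncard : ℝ) := by
      by_contra hcon
      exact huL (hLdef ▸ (Set.mem_setOf_eq ▸ (by push_neg at hcon; linarith)))
    have hdw : (1 / 2 - 4 * s) * (n : ℝ) < ((G.neighborSet w).ncard : ℝ) := by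
      by_contra hcon
      exact hwL (hLdef ▸ (Set.mem_setOf_eq ▸ (by push_neg at hcon; linarith)))
    have hdSu : ((degIn G S u : ℕ) : ℝ) < 7 / 2 * s * n := by
      by_contra hcon
      push_neg at hcon
      exact huW (hWdef ▸ Or.inl ⟨huS, hcon⟩)
    have hdSw : ((degIn G S w : ℕ) : ℝ) < 7 / 2 * s * n := by
      by_contra hcon
      push_neg at hcon
      exact hwW (hWdef ▸ Or.inl ⟨hwS, hcon⟩)
    have hsplitu := deg_split G S T hUn hInt u
    have hsplitw := deg_split G S T hUn hInt w
    have hdTu : (1 / 2 - 4 * s) * (n : ℝ) - 7 / 2 * s * n < ((degIn G T u : ℕ) : ℝ) := by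
      have : ((G.neighborSet u).ncard : ℝ) = (degIn G S u : ℝ) + (degIn G T u : ℝ) := by
        exact_mod_cast congrArg (Nat.cast : ℕ → ℝ) hsplitu
      linarith
    have hdTw : (1 / 2 - 4 * s) * (n : ℝ) - 7 / 2 * s * n < ((degIn G T w : ℕ) : ℝ) := by
      have : ((G.neighborSet w).ncard : ℝ) = (degIn G S w : ℝ) + (degIn G T w : ℝ) := by
        exact_mod_cast congrArg (Nat.cast : ℕ → ℝ) hsplitw
      linarith
    -- neighbours in the good part of T
    set Pu : Set (Fin n) := {z ∈ T \ (L ∪ W) | G.Adj u z} with hPu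
    set Pw : Set (Fin n) := {z ∈ T \ (L ∪ W) | G.Adj w z} with hPw
    have hsubu : {z ∈ T | G.Adj u z} ⊆ Pu ∪ (L ∪ W) := by
      rintro z ⟨hzT, hz⟩
      by_cases hLW : z ∈ L ∪ W
      · exact Or.inr hLW
      · exact Or.inl ⟨⟨hzT, hLW⟩, hz⟩
    have hsubw : {z ∈ T | G.Adj w z} ⊆ Pw ∪ (L ∪ W) := by
      rintro z ⟨hzT, hz⟩
      by_cases hLW : z ∈ L ∪ W
      · exact Or.inr hLW
      · exact Or.inl ⟨⟨hzT, hLW⟩, hz⟩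
    have hcountu : (degIn G T u : ℝ) ≤ (Pu.ncard : ℝ) + (L.ncard : ℝ) + (W.ncard : ℝ) := by
      have h1 : degIn G T u ≤ (Pu ∪ (L ∪ W)).ncard :=
        Set.ncard_le_ncard hsubu (Set.toFinite _)
      have h2 : (Pu ∪ (L ∪ W)).ncard ≤ Pu.ncard + (L ∪ W).ncard := Set.ncard_union_le _ _
      have h3 : (L ∪ W).ncard ≤ L.ncard + W.ncard := Set.ncard_union_le _ _
      have h4 : degIn G T u ≤ Pu.ncard + L.ncard + W.ncard := by omega
      exact_mod_cast h4
    have hcountw : (degIn G T w : ℝ) ≤ (Pw.ncard : ℝ) + (L.ncard : ℝ) + (W.ncard : ℝ) := by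
      have h1 : degIn G T w ≤ (Pw ∪ (L ∪ W)).ncard :=
        Set.ncard_le_ncard hsubw (Set.toFinite _)
      have h2 : (Pw ∪ (L ∪ W)).ncard ≤ Pw.ncard + (L ∪ W).ncard := Set.ncard_union_le _ _
      have h3 : (L ∪ W).ncard ≤ L.ncard + W.ncard := Set.ncard_union_le _ _
      have h4 : degIn G T w ≤ Pw.ncard + L.ncard + W.ncard := by omega
      exact_mod_cast h4
    have hie := Set.ncard_inter_add_ncard_union Pu Pw (Set.toFinite _) (Set.toFinite _)
    have hunionT : (Pu ∪ Pw).ncard ≤ T.ncard := by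
      apply Set.ncard_le_ncard _ (Set.toFinite _)
      rintro z (⟨⟨hzT, _⟩, _⟩ | ⟨⟨hzT, _⟩, _⟩) <;> exact hzT
    have hcommon : (Pu ∩ Pw).ncard ≤ r := by
      have hsub : Pu ∩ Pw ⊆ {z : Fin n | G.Adj u z ∧ G.Adj w z} := by
        rintro z ⟨⟨_, h1⟩, ⟨_, h2⟩⟩
        exact ⟨h1, h2⟩
      exact (Set.ncard_le_ncard hsub (Set.toFinite _)).trans (hGbf u w hadj)
    -- combine into a contradiction
    have hieR : ((Pu ∩ Pw).ncard : ℝ) + ((Pu ∪ Pw).ncard : ℝ)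
        = (Pu.ncard : ℝ) + (Pw.ncard : ℝ) := by exact_mod_cast hie
    have hunionTR : ((Pu ∪ Pw).ncard : ℝ) ≤ (T.ncard : ℝ) := by exact_mod_cast hunionT
    have hcommonR : ((Pu ∩ Pw).ncard : ℝ) ≤ (r : ℝ) := by exact_mod_cast hcommon
    linarith
  -- the modified graph
  set G' : SimpleGraph (Fin n) :=
    { Adj := fun a b => a ≠ b ∧
        ((G.Adj a b ∧ a ≠ x ∧ b ≠ x) ∨ (a = x ∧ b ∈ A) ∨ (b = x ∧ a ∈ A)),
      symm := ⟨by
        rintro a b ⟨hne, (⟨ha, h3, h4⟩ | ⟨h3, h4⟩ | ⟨h3, h4⟩)⟩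
        · exact ⟨hne.symm, Or.inl ⟨ha.symm, h4, h3⟩⟩
        · exact ⟨hne.symm, Or.inr (Or.inr ⟨h3, h4⟩)⟩
        · exact ⟨hne.symm, Or.inr (Or.inl ⟨h3, h4⟩)⟩⟩
      loopless := ⟨fun a h => h.1 rfl⟩ } with hG'def
  have hadj' : ∀ a b : Fin n, G'.Adj a b ↔ (a ≠ b ∧
      ((G.Adj a b ∧ a ≠ x ∧ b ≠ x) ∨ (a = x ∧ b ∈ A) ∨ (b = x ∧ a ∈ A))) := by
    intro a b; rfl
  have hadj_ne : ∀ a b : Fin n, a ≠ x → b ≠ x → (G'.Adj a b ↔ G.Adj a b) := by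
    intro a b ha hb
    rw [hadj']
    constructor
    · rintro ⟨hne, (⟨h, _, _⟩ | ⟨h3, _⟩ | ⟨h3, _⟩)⟩
      · exact h
      · exact absurd h3 ha
      · exact absurd h3 hb
    · intro h
      exact ⟨h.ne, Or.inl ⟨h, ha, hb⟩⟩
  have hadj_x : ∀ b : Fin n, G'.Adj x b ↔ b ∈ A := by
    intro b
    rw [hadj']
    constructor
    · rintro ⟨hne, (⟨_, h3, _⟩ | ⟨_, h4⟩ | ⟨h3, h4⟩)⟩
      · exact absurd rfl h3
      · exact h4
      · exact absurd h4 hxA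
    · intro hb
      exact ⟨fun h => hxA (h ▸ hb), Or.inr (Or.inl ⟨rfl, hb⟩)⟩
  -- G' is book-free
  have hbf' : BookFree r G' := by
    have hkey : ∀ a b : Fin n, G'.Adj a b → a = x →
        {z : Fin n | G'.Adj a z ∧ G'.Adj b z}.ncard ≤ r := by
      intro a b hab hax
      have hbA : b ∈ A := (hadj_x b).1 (hax ▸ hab)
      have hempty : {z : Fin n | G'.Adj a z ∧ G'.Adj b z} = ∅ := by
        apply Set.eq_empty_iff_forall_notMem.2
        rintro z ⟨hz1, hz2⟩
        have hzA : z ∈ A := (hadj_x z).1 (hax ▸ hz1)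
        have hzx : z ≠ x := fun h => hxA (h ▸ hzA)
        have hbx : b ≠ x := fun h => hxA (h ▸ hbA)
        exact hAindep b z hbA hzA ((hadj_ne b z hbx hzx).1 hz2)
      rw [hempty, Set.ncard_empty]
      omega
    intro a b hab
    by_cases ha : a = x
    · exact hkey a b hab ha
    by_cases hb : b = x
    · have hswap := hkey b a hab.symm hb
      have hsetswap : {z : Fin n | G'.Adj b z ∧ G'.Adj a z}
          = {z : Fin n | G'.Adj a z ∧ G'.Adj b z} := by
        ext z; exact and_comm
      rwa [hsetswap] at hswap
    · have hGab : G.Adj a b := (hadj_ne a b ha hb).1 hab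
      have hsub : {z : Fin n | G'.Adj a z ∧ G'.Adj b z}
          ⊆ {z : Fin n | G.Adj a z ∧ G.Adj b z} := by
        rintro z ⟨hz1, hz2⟩
        by_cases hzx : z = x
        · exfalso
          rw [hzx] at hz1 hz2
          exact hAindep a b ((hadj_x a).1 hz1.symm) ((hadj_x b).1 hz2.symm) hGab
        · exact ⟨(hadj_ne a z ha hzx).1 hz1, (hadj_ne b z hb hzx).1 hz2⟩
      exact (Set.ncard_le_ncard hsub (Set.toFinite _)).trans (hGbf a b hGab)
  -- G' is not 2-colorable
  have hedges : ∀ e ∈ C.edges, e ∈ G'.edgeSet := by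
    intro e he
    induction e using Sym2.ind with
    | _ a b =>
      have hGab : G.Adj a b := C.edges_subset_edgeSet he
      have haC : a ∈ C.support := SimpleGraph.Walk.fst_mem_support_of_mem_edges C he
      have hbC : b ∈ C.support := SimpleGraph.Walk.snd_mem_support_of_mem_edges C he
      have hax : a ≠ x := fun h => hxC (h ▸ haC)
      have hbx : b ≠ x := fun h => hxC (h ▸ hbC)
      exact (SimpleGraph.mem_edgeSet G').2 ((hadj_ne a b hax hbx).2 hGab)
  have hnb' : ¬ G'.Colorable 2 := by
    apply odd_closed_walk_not_colorable (C.transfer G' hedges)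
    rw [SimpleGraph.Walk.length_transfer]
    exact hCodd
  -- edge count
  have keyE : ∀ H : SimpleGraph (Fin n),
      H.edgeSet.ncard = (H.edgeSet \ H.incidenceSet x).ncard + (H.neighborSet x).ncard := by
    intro H
    have h1 : (H.incidenceSet x).ncard = (H.neighborSet x).ncard := by
      rw [← Nat.card_coe_set_eq, ← Nat.card_coe_set_eq]
      exact Nat.card_congr (H.incidenceSetEquivNeighborSet x)
    rw [← h1, Set.ncard_diff_add_ncard_of_subset (H.incidenceSet_subset x) (Set.toFinite _)]
  have hmem : ∀ (H : SimpleGraph (Fin n)) (a b : Fin n),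
      s(a, b) ∈ H.edgeSet \ H.incidenceSet x ↔ H.Adj a b ∧ a ≠ x ∧ b ≠ x := by
    intro H a b
    constructor
    · rintro ⟨h, h2⟩
      have h' := (SimpleGraph.mem_edgeSet H).1 h
      refine ⟨h', fun hax => h2 ⟨h, ?_⟩, fun hbx => h2 ⟨h, ?_⟩⟩
      · rw [Sym2.mem_iff]; exact Or.inl hax.symm
      · rw [Sym2.mem_iff]; exact Or.inr hbx.symm
    · rintro ⟨h, hax, hbx⟩
      refine ⟨(SimpleGraph.mem_edgeSet H).2 h, fun hc => ?_⟩
      rcases (Sym2.mem_iff).1 hc.2 with h3 | h3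
      · exact hax h3.symm
      · exact hbx h3.symm
  have hEdiff : G'.edgeSet \ G'.incidenceSet x = G.edgeSet \ G.incidenceSet x := by
    ext e
    induction e using Sym2.ind with
    | _ a b =>
      rw [hmem G' a b, hmem G a b]
      constructor
      · rintro ⟨h, hax, hbx⟩; exact ⟨(hadj_ne a b hax hbx).1 h, hax, hbx⟩
      · rintro ⟨h, hax, hbx⟩; exact ⟨(hadj_ne a b hax hbx).2 h, hax, hbx⟩
  have hNx' : G'.neighborSet x = A := by
    ext b; exact hadj_x b
  have hA_lb : ((G.neighborSet x).ncard : ℝ) < (A.ncard : ℝ) := by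
    have hdx : ((G.neighborSet x).ncard : ℝ) ≤ (1 / 2 - 4 * s) * n := by
      rw [hLdef] at hxL; exact hxL
    have hsubS : S ⊆ A ∪ (L ∪ W) := by
      intro z hz
      by_cases hLW : z ∈ L ∪ W
      · exact Or.inr hLW
      · exact Or.inl ⟨hz, hLW⟩
    have h1 : S.ncard ≤ A.ncard + (L.ncard + W.ncard) := by
      have ha := Set.ncard_le_ncard hsubS (Set.toFinite _)
      have hb := Set.ncard_union_le A (L ∪ W)
      have hc := Set.ncard_union_le L W
      omega
    have h1R : (S.ncard : ℝ) ≤ (A.ncard : ℝ) + ((L.ncard : ℝ) + (W.ncard : ℝ)) := by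
      exact_mod_cast h1
    linarith
  have hA_lbN : (G.neighborSet x).ncard < A.ncard := by exact_mod_cast hA_lb
  have hcard : G.edgeSet.ncard < G'.edgeSet.ncard := by
    rw [keyE G, keyE G', hEdiff, hNx']
    omega
  exact absurd (hmax G' hnb' hbf') (by omega)
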